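/- arXiv:1710.04777 — 5 statements merged into one kernel-verified Lean document; each statement's English description precedes it below -/
import Mathlib

section
/- Let n ≥ 1, let A : ℝ^n → Sym_n(ℝ) be a map into symmetric n×n real matrices with A(y) positive semidefinite for every y, and let H : ℝ^n × ℝ^n → ℝ be any function. Fix p ∈ ℝ^n and γ, γ' ∈ ℝ. Suppose w, w' : ℝ^n → ℝ are C², ℤ^n-periodic, and satisfy −tr(A(y) D²w(y)) + H(∇w(y) + p, y) = γ and −tr(A(y) D²w'(y)) + H(∇w'(y) + p, y) = γ' for all y ∈ ℝ^n. Then γ = γ'. (Uniqueness of the effective Hamiltonian value for classical solutions of the cell problem.) -/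
open scoped InnerProductSpace

/-- The Hessian matrix of `w : ℝⁿ → ℝ` at `y`, with entries the iterated directional
derivatives along the standard basis vectors. -/
noncomputable def hessM {n : ℕ} (w : EuclideanSpace ℝ (Fin n) → ℝ)
    (y : EuclideanSpace ℝ (Fin n)) : Matrix (Fin n) (Fin n) ℝ :=
  fun i j =>
    fderiv ℝ (fun z => fderiv ℝ w z (EuclideanSpace.single j 1)) y (EuclideanSpace.single i 1)

/-- An integer vector `k ∈ ℤⁿ` viewed as an element of `ℝⁿ`. -/
noncomputable def intVec {n : ℕ} (k : Fin n → ℤ) : EuclideanSpace ℝ (Fin n) :=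
  (WithLp.equiv 2 (Fin n → ℝ)).symm (fun i => (k i : ℝ))

/-- A function on `ℝⁿ` is `ℤⁿ`-periodic. -/
def ZPeriodic {n : ℕ} (f : EuclideanSpace ℝ (Fin n) → ℝ) : Prop :=
  ∀ (y : EuclideanSpace ℝ (Fin n)) (k : Fin n → ℤ), f (y + intVec k) = f y

section Aux

open Filter Set
open scoped Matrix

/-- 1D second derivative test at a local max. -/
lemma secondDeriv_nonpos_of_isLocalMax {g g' : ℝ → ℝ} {d : ℝ}
    (hg : ∀ t, HasDerivAt g (g' t) t) (hd : HasDerivAt g' d 0)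
    (hmax : IsLocalMax g 0) : d ≤ 0 := by
  by_contra hlt
  push_neg at hlt
  have h0 : g' 0 = 0 := hmax.hasDerivAt_eq_zero (hg 0)
  have hslope : Tendsto (slope g' 0) (nhdsWithin 0 {(0:ℝ)}ᶜ) (nhds d) :=
    hasDerivAt_iff_tendsto_slope.mp hd
  have h1 : ∀ᶠ t in nhdsWithin 0 {(0:ℝ)}ᶜ, 0 < slope g' 0 t :=
    hslope.eventually (eventually_gt_nhds hlt)
  have h1' : ∀ᶠ t in nhdsWithin 0 (Ioi 0), 0 < slope g' 0 t :=
    h1.filter_mono (nhdsWithin_mono 0 (fun x hx => ne_of_gt hx))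
  have h2 : ∀ᶠ t in nhdsWithin 0 (Ioi 0), g t ≤ g 0 :=
    hmax.filter_mono nhdsWithin_le_nhds
  have h3 := h1'.and h2
  rw [eventually_iff, mem_nhdsGT_iff_exists_Ioc_subset] at h3
  obtain ⟨ε, hε, hsub⟩ := h3
  have hεpos : 0 < ε := hε
  have hmono : StrictMonoOn g (Icc 0 ε) := by
    apply strictMonoOn_of_deriv_pos (convex_Icc 0 ε)
    · exact fun x _ => (hg x).continuousAt.continuousWithinAt
    · intro x hx
      rw [interior_Icc] at hx
      have hx' : x ∈ Ioc 0 ε := ⟨hx.1, le_of_lt hx.2⟩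
      have := (hsub hx').1
      rw [(hg x).deriv]
      have hxpos : 0 < x := hx.1
      rw [slope_def_field, h0, sub_zero, sub_zero] at this
      calc 0 = 0 * x := by ring
        _ < (g' x / x) * x := by exact mul_lt_mul_of_pos_right this hxpos
        _ = g' x := by field_simp
  have hle : g ε ≤ g 0 := (hsub ⟨hεpos, le_refl ε⟩).2
  have : g 0 < g ε := hmono ⟨le_refl 0, le_of_lt hεpos⟩ ⟨le_of_lt hεpos, le_refl ε⟩ hεpos
  linarith

/-- If `A` is PSD and the quadratic form of `M` is nonpositive, then `tr(A M) ≤ 0`. -/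
lemma trace_mul_nonpos {n : ℕ} {A M : Matrix (Fin n) (Fin n) ℝ} (hA : A.PosSemidef)
    (hM : ∀ x : Fin n → ℝ, ∑ i, ∑ j, x i * x j * M i j ≤ 0) :
    (A * M).trace ≤ 0 := by
  obtain ⟨B, rfl⟩ : ∃ B : Matrix (Fin n) (Fin n) ℝ, A = Bᴴ * B := by
    classical
    open scoped MatrixOrder in
    obtain ⟨X, hX, -, hXA⟩ :=
      CFC.exists_sqrt_of_isSelfAdjoint_of_quasispectrumRestricts hA.isHermitian
        (QuasispectrumRestricts.nnreal_of_nonneg hA.nonneg)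
    exact ⟨X, by rw [← hXA, ← Matrix.star_eq_conjTranspose, hX.star_eq]⟩
  have htr : (Bᴴ * B * M).trace = ∑ k, ∑ i, ∑ j, B k i * B k j * M i j := by
    rw [← Matrix.trace_mul_cycle]
    simp only [Matrix.trace, Matrix.diag, Matrix.mul_apply, Matrix.conjTranspose_apply,
      star_trivial, Finset.sum_mul, Finset.mul_sum]
    apply Finset.sum_congr rfl; intro k _
    rw [Finset.sum_comm]
    apply Finset.sum_congr rfl; intro i _
    apply Finset.sum_congr rfl; intro j _
    ring
  rw [htr]
  exact Finset.sum_nonpos fun k _ => hM (fun i => B k i)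

/-- Existence of a global maximum for a continuous `ℤⁿ`-periodic function. -/
lemma exists_global_max {n : ℕ} (v : EuclideanSpace ℝ (Fin n) → ℝ)
    (hv : Continuous v) (hper : ZPeriodic v) :
    ∃ y₀, ∀ y, v y ≤ v y₀ := by
  set K : Set (EuclideanSpace ℝ (Fin n)) :=
    (fun x : Fin n → ℝ => (WithLp.equiv 2 (Fin n → ℝ)).symm x) ''
      (Set.univ.pi fun _ => Icc (0:ℝ) 1) with hK
  have hKc : IsCompact K :=
    (isCompact_univ_pi fun _ => isCompact_Icc).image (PiLp.continuous_toLp 2 _)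
  have hKne : K.Nonempty := ⟨(WithLp.equiv 2 (Fin n → ℝ)).symm (fun _ => 0),
    ⟨fun _ => 0, fun i _ => ⟨le_refl 0, zero_le_one⟩, rfl⟩⟩
  obtain ⟨y₀, _, hy₀⟩ := hKc.exists_isMaxOn hKne hv.continuousOn
  refine ⟨y₀, fun y => ?_⟩
  set k : Fin n → ℤ := fun i => ⌊y i⌋ with hk
  set z : EuclideanSpace ℝ (Fin n) := y - intVec k with hz
  have hyz : y = z + intVec k := by rw [hz]; abel
  have hzK : z ∈ K := by
    refine ⟨fun i => Int.fract (y i),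
      fun i _ => ⟨Int.fract_nonneg _, le_of_lt (Int.fract_lt_one _)⟩, ?_⟩
    ext i
    show y i - (⌊y i⌋ : ℝ) = y i - (⌊y i⌋ : ℝ)
    rfl
  calc v y = v z := by rw [hyz, hper z k]
    _ ≤ v y₀ := hy₀ hzK

lemma sum_single_eq {n : ℕ} (x : Fin n → ℝ) :
    (∑ i, x i • EuclideanSpace.single i (1:ℝ)) = (WithLp.equiv 2 (Fin n → ℝ)).symm x := by
  ext j
  have : (∑ i, x i • EuclideanSpace.single i (1:ℝ)) j
      = ∑ i, (x i • EuclideanSpace.single i (1:ℝ)) j := by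
    rw [WithLp.ofLp_sum]; exact Finset.sum_apply j Finset.univ _
  rw [this]
  simp [EuclideanSpace.single_apply]

lemma quadform_expand {n : ℕ}
    (B : EuclideanSpace ℝ (Fin n) →L[ℝ] EuclideanSpace ℝ (Fin n) →L[ℝ] ℝ) (x : Fin n → ℝ) :
    B ((WithLp.equiv 2 (Fin n → ℝ)).symm x) ((WithLp.equiv 2 (Fin n → ℝ)).symm x)
      = ∑ i, ∑ j, x i * x j * B (EuclideanSpace.single i 1) (EuclideanSpace.single j 1) := by
  rw [← sum_single_eq x]
  have h1 : B (∑ i, x i • EuclideanSpace.single i (1:ℝ))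
      = ∑ i, x i • B (EuclideanSpace.single i (1:ℝ)) := by
    rw [map_sum]
    exact Finset.sum_congr rfl fun i _ => map_smul B _ _
  rw [h1, ContinuousLinearMap.sum_apply]
  apply Finset.sum_congr rfl; intro i _
  rw [ContinuousLinearMap.smul_apply]
  have h2 : B (EuclideanSpace.single i (1:ℝ)) (∑ j, x j • EuclideanSpace.single j (1:ℝ))
      = ∑ j, x j • B (EuclideanSpace.single i (1:ℝ)) (EuclideanSpace.single j (1:ℝ)) := by
    rw [map_sum]
    exact Finset.sum_congr rfl fun j _ => map_smul _ _ _
  rw [h2, Finset.smul_sum]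
  apply Finset.sum_congr rfl; intro j _
  simp [smul_eq_mul]
  ring

lemma fderiv_clm_apply_eq {n : ℕ} {v : EuclideanSpace ℝ (Fin n) → ℝ} (hv : ContDiff ℝ 2 v)
    (y : EuclideanSpace ℝ (Fin n)) (u : EuclideanSpace ℝ (Fin n)) :
    fderiv ℝ (fun z => fderiv ℝ v z u) y =
      (ContinuousLinearMap.apply ℝ ℝ u).comp (fderiv ℝ (fderiv ℝ v) y) := by
  have hC1 : ContDiff ℝ 1 (fderiv ℝ v) := hv.fderiv_right (by norm_num)
  have hB : HasFDerivAt (fderiv ℝ v) (fderiv ℝ (fderiv ℝ v) y) y :=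
    (hC1.differentiable (by norm_num) y).hasFDerivAt
  exact (((ContinuousLinearMap.apply ℝ ℝ u).hasFDerivAt).comp y hB).fderiv

lemma hessM_eq {n : ℕ} {v : EuclideanSpace ℝ (Fin n) → ℝ} (hv : ContDiff ℝ 2 v)
    (y : EuclideanSpace ℝ (Fin n)) (i j : Fin n) :
    hessM v y i j =
      fderiv ℝ (fderiv ℝ v) y (EuclideanSpace.single i 1) (EuclideanSpace.single j 1) := by
  unfold hessM
  rw [fderiv_clm_apply_eq hv]
  rfl

lemma hessM_sub {n : ℕ} {w w' : EuclideanSpace ℝ (Fin n) → ℝ}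
    (hw : ContDiff ℝ 2 w) (hw' : ContDiff ℝ 2 w') (y : EuclideanSpace ℝ (Fin n)) :
    hessM (fun z => w z - w' z) y = hessM w y - hessM w' y := by
  have hv : ContDiff ℝ 2 (fun z => w z - w' z) := hw.sub hw'
  have hdw : Differentiable ℝ w := hw.differentiable (by norm_num)
  have hdw' : Differentiable ℝ w' := hw'.differentiable (by norm_num)
  have hfd : ∀ z, fderiv ℝ (fun z => w z - w' z) z = fderiv ℝ w z - fderiv ℝ w' z :=
    fun z => fderiv_sub (hdw z) (hdw' z)
  funext i j
  rw [hessM_eq hv, Matrix.sub_apply, hessM_eq hw, hessM_eq hw']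
  have hes : (fderiv ℝ (fun z => w z - w' z)) = fun z => fderiv ℝ w z - fderiv ℝ w' z :=
    funext hfd
  have hC1w : ContDiff ℝ 1 (fderiv ℝ w) := hw.fderiv_right (by norm_num)
  have hC1w' : ContDiff ℝ 1 (fderiv ℝ w') := hw'.fderiv_right (by norm_num)
  rw [hes]
  rw [fderiv_fun_sub (hC1w.differentiable (by norm_num) y) (hC1w'.differentiable (by norm_num) y)]
  simp

/-- Global max gives nonpositive second directional derivative. -/
lemma secondFDeriv_nonpos_of_max {n : ℕ} {v : EuclideanSpace ℝ (Fin n) → ℝ}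
    (hv : ContDiff ℝ 2 v)
    {y₀ : EuclideanSpace ℝ (Fin n)} (hmax : ∀ y, v y ≤ v y₀)
    (u : EuclideanSpace ℝ (Fin n)) :
    fderiv ℝ (fderiv ℝ v) y₀ u u ≤ 0 := by
  have hdv : Differentiable ℝ v := hv.differentiable (by norm_num)
  have hC1 : ContDiff ℝ 1 (fderiv ℝ v) := hv.fderiv_right (by norm_num)
  set L : ℝ → EuclideanSpace ℝ (Fin n) := fun t => y₀ + t • u with hL
  have hLd : ∀ t, HasDerivAt L u t := by
    intro t
    have : HasDerivAt (fun t : ℝ => t • u) ((1:ℝ) • u) t := (hasDerivAt_id t).smul_const u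
    have := this.const_add y₀
    rw [one_smul] at this
    exact this
  set g : ℝ → ℝ := fun t => v (L t) with hg
  set g' : ℝ → ℝ := fun t => fderiv ℝ v (L t) u with hg'
  have hgd : ∀ t, HasDerivAt g (g' t) t := by
    intro t
    exact ((hdv (L t)).hasFDerivAt).comp_hasDerivAt t (hLd t)
  have hg'd : HasDerivAt g' (fderiv ℝ (fderiv ℝ v) y₀ u u) 0 := by
    have hB : HasFDerivAt (fderiv ℝ v) (fderiv ℝ (fderiv ℝ v) (L 0)) (L 0) :=
      (hC1.differentiable (by norm_num) (L 0)).hasFDerivAt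
    have := (((ContinuousLinearMap.apply ℝ ℝ u).hasFDerivAt).comp (L 0) hB).comp_hasDerivAt
      0 (hLd 0)
    have hL0 : L 0 = y₀ := by simp [hL]
    rw [hL0] at this
    exact this
  have hgmax : IsLocalMax g 0 := by
    apply Filter.Eventually.of_forall
    intro t
    have : g 0 = v y₀ := by simp [hg, hL]
    rw [this]
    exact hmax (L t)
  exact secondDeriv_nonpos_of_isLocalMax hgd hg'd hgmax

/-- One-sided comparison. -/
lemma key_le {n : ℕ}
    (A : EuclideanSpace ℝ (Fin n) → Matrix (Fin n) (Fin n) ℝ)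
    (hApsd : ∀ y, (A y).PosSemidef)
    (H : EuclideanSpace ℝ (Fin n) → EuclideanSpace ℝ (Fin n) → ℝ)
    (p : EuclideanSpace ℝ (Fin n)) (γ γ' : ℝ)
    (w w' : EuclideanSpace ℝ (Fin n) → ℝ)
    (hw : ContDiff ℝ 2 w) (hw' : ContDiff ℝ 2 w')
    (hwper : ZPeriodic w) (hw'per : ZPeriodic w')
    (heq : ∀ y, -((A y) * hessM w y).trace + H (gradient w y + p) y = γ)
    (heq' : ∀ y, -((A y) * hessM w' y).trace + H (gradient w' y + p) y = γ') :
    γ' ≤ γ := by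
  set v : EuclideanSpace ℝ (Fin n) → ℝ := fun z => w z - w' z with hvdef
  have hv : ContDiff ℝ 2 v := hw.sub hw'
  have hvper : ZPeriodic v := by
    intro y k
    show w (y + intVec k) - w' (y + intVec k) = w y - w' y
    rw [hwper y k, hw'per y k]
  obtain ⟨y₀, hmax⟩ := exists_global_max v hv.continuous hvper
  -- gradient equality
  have hdw : Differentiable ℝ w := hw.differentiable (by norm_num)
  have hdw' : Differentiable ℝ w' := hw'.differentiable (by norm_num)
  have hlocmax : IsLocalMax v y₀ := Filter.Eventually.of_forall fun y => hmax y
  have hf0 : fderiv ℝ v y₀ = 0 := hlocmax.fderiv_eq_zero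
  have hfsub : fderiv ℝ v y₀ = fderiv ℝ w y₀ - fderiv ℝ w' y₀ :=
    fderiv_sub (hdw y₀) (hdw' y₀)
  have hfeq : fderiv ℝ w y₀ = fderiv ℝ w' y₀ := by
    have := hfsub.symm.trans hf0
    exact sub_eq_zero.mp this
  have hgrad : gradient w y₀ = gradient w' y₀ := by
    unfold gradient
    rw [hfeq]
  -- quadratic form of hessM v y₀ is nonpositive
  have hquad : ∀ x : Fin n → ℝ, ∑ i, ∑ j, x i * x j * hessM v y₀ i j ≤ 0 := by
    intro x
    have hB := secondFDeriv_nonpos_of_max hv hmax ((WithLp.equiv 2 (Fin n → ℝ)).symm x)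
    rw [quadform_expand (fderiv ℝ (fderiv ℝ v) y₀) x] at hB
    calc ∑ i, ∑ j, x i * x j * hessM v y₀ i j
        = ∑ i, ∑ j, x i * x j *
            fderiv ℝ (fderiv ℝ v) y₀ (EuclideanSpace.single i 1) (EuclideanSpace.single j 1) := by
          apply Finset.sum_congr rfl; intro i _
          apply Finset.sum_congr rfl; intro j _
          rw [hessM_eq hv]
      _ ≤ 0 := hB
  have htr : ((A y₀) * hessM v y₀).trace ≤ 0 := trace_mul_nonpos (hApsd y₀) hquad
  have hsplit : ((A y₀) * hessM v y₀).trace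
      = ((A y₀) * hessM w y₀).trace - ((A y₀) * hessM w' y₀).trace := by
    rw [hessM_sub hw hw' y₀, Matrix.mul_sub, Matrix.trace_sub]
  have h1 := heq y₀
  have h2 := heq' y₀
  rw [hgrad] at h1
  rw [hsplit] at htr
  linarith

end Aux

/-- Uniqueness of the effective Hamiltonian value for classical solutions
of the cell problem. -/
theorem effective_value_unique
    (n : ℕ) (hn : 1 ≤ n)
    (A : EuclideanSpace ℝ (Fin n) → Matrix (Fin n) (Fin n) ℝ)
    (hAsymm : ∀ y, (A y).IsSymm) (hApsd : ∀ y, (A y).PosSemidef)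
    (H : EuclideanSpace ℝ (Fin n) → EuclideanSpace ℝ (Fin n) → ℝ)
    (p : EuclideanSpace ℝ (Fin n)) (γ γ' : ℝ)
    (w w' : EuclideanSpace ℝ (Fin n) → ℝ)
    (hw : ContDiff ℝ 2 w) (hw' : ContDiff ℝ 2 w')
    (hwper : ZPeriodic w) (hw'per : ZPeriodic w')
    (heq : ∀ y, -((A y) * hessM w y).trace + H (gradient w y + p) y = γ)
    (heq' : ∀ y, -((A y) * hessM w' y).trace + H (gradient w' y + p) y = γ') :
    γ = γ' := by
  have h1 : γ' ≤ γ := key_le A hApsd H p γ γ' w w' hw hw' hwper hw'per heq heq'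
  have h2 : γ ≤ γ' := key_le A hApsd H p γ' γ w' w hw' hw hw'per hwper heq' heq
  exact le_antisymm h2 h1
end

section
/- Let n ≥ 1, let A : ℝ^n → Sym_n(ℝ) with A(y) positive semidefinite for every y, and let H : ℝ^n × ℝ^n → ℝ satisfy the quadratic growth condition α|q|² − α' ≤ H(q, y) ≤ β|q|² + β' for all (q, y) ∈ ℝ^n × ℝ^n, where α, β > 0 and α', β' ≥ 0. Fix p ∈ ℝ^n and γ ∈ ℝ. If w : ℝ^n → ℝ is a C², ℤ^n-periodic function satisfying −tr(A(y) D²w(y)) + H(∇w(y) + p, y) = γ for all y ∈ ℝ^n, then α|p|² − α' ≤ γ ≤ β|p|² + β'. -/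
open scoped InnerProductSpace

open Filter Set Topology Matrix Finset in
private lemma second_deriv_nonpos_of_isLocalMax {g g' : ℝ → ℝ} {c : ℝ}
    (hd : ∀ t, HasDerivAt g (g' t) t) (hd' : HasDerivAt g' c 0)
    (hmax : IsLocalMax g 0) : c ≤ 0 := by
  by_contra hc
  push_neg at hc
  have hg'0 : g' 0 = 0 := by
    have := hmax.deriv_eq_zero
    rwa [(hd 0).deriv] at this
  have hslope : Tendsto (slope g' 0) (𝓝[≠] 0) (𝓝 c) :=
    hasDerivAt_iff_tendsto_slope.mp hd'
  have h1 : ∀ᶠ t in 𝓝[>] (0:ℝ), c / 2 < slope g' 0 t :=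
    (hslope.eventually (eventually_gt_nhds (by linarith))).filter_mono
      (nhdsWithin_mono 0 (fun t ht => ne_of_gt ht))
  have h2 : ∀ᶠ t in 𝓝[>] (0:ℝ), g t ≤ g 0 :=
    (hmax.filter_mono nhdsWithin_le_nhds)
  obtain ⟨δ, hδ, hδp⟩ := (nhdsGT_basis (0:ℝ)).eventually_iff.mp (h1.and h2)
  have hgpos : ∀ t ∈ Ioo (0:ℝ) δ, 0 < g' t := by
    intro t ht
    have := (hδp ht).1
    rw [slope_def_field, hg'0, sub_zero, sub_zero] at this
    have htpos := ht.1
    have : c / 2 * t < g' t := by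
      rw [lt_div_iff₀ htpos] at this
      linarith [this]
    nlinarith
  have hmono : StrictMonoOn g (Icc 0 (δ/2)) := by
    apply strictMonoOn_of_deriv_pos (convex_Icc _ _)
    · exact fun x _ => (hd x).continuousAt.continuousWithinAt
    · intro x hx
      rw [interior_Icc] at hx
      rw [(hd x).deriv]
      exact hgpos x ⟨hx.1, hx.2.trans (by linarith)⟩
  have hlt : g 0 < g (δ/2) :=
    hmono ⟨le_refl 0, by linarith⟩ ⟨by linarith, le_refl _⟩ (by linarith)
  have := (hδp (⟨by linarith, by linarith⟩ : δ/2 ∈ Ioo 0 δ)).2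
  linarith

private lemma second_deriv_nonneg_of_isLocalMin {g g' : ℝ → ℝ} {c : ℝ}
    (hd : ∀ t, HasDerivAt g (g' t) t) (hd' : HasDerivAt g' c 0)
    (hmin : IsLocalMin g 0) : 0 ≤ c := by
  have := second_deriv_nonpos_of_isLocalMax (g := fun t => -g t) (g' := fun t => -(g' t))
    (c := -c) (fun t => (hd t).neg) hd'.neg hmin.neg
  linarith

open scoped MatrixOrder in
open Finset Matrix in
private lemma trace_mul_nonneg_of_posSemidef {n : ℕ} {A M : Matrix (Fin n) (Fin n) ℝ}
    (hA : A.PosSemidef) (hM : ∀ u : Fin n → ℝ, 0 ≤ u ⬝ᵥ (M *ᵥ u)) :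
    0 ≤ (A * M).trace := by
  set S := CFC.sqrt A with hS
  have hSsymm : ∀ i j, S i j = S j i := by
    intro i j
    have := (Matrix.nonneg_iff_posSemidef.mp (CFC.sqrt_nonneg A)).isHermitian
    have h := congrFun (congrFun this.eq i) j
    simpa [Matrix.conjTranspose_apply] using h.symm
  have hAS : A = S * S := (CFC.sqrt_mul_sqrt_self A (Matrix.nonneg_iff_posSemidef.mpr hA)).symm
  have h1 : (A * M).trace = (S * M * S).trace := by
    rw [hAS, Matrix.mul_assoc, Matrix.trace_mul_comm S (S * M)]
  rw [h1, Matrix.trace]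
  apply Finset.sum_nonneg
  intro i _
  have : (S * M * S).diag i = (fun j => S i j) ⬝ᵥ (M *ᵥ (fun j => S i j)) := by
    simp only [Matrix.diag_apply, Matrix.mul_apply, dotProduct, Matrix.mulVec, dotProduct,
      Finset.sum_mul, Finset.mul_sum]
    rw [Finset.sum_comm]
    apply Finset.sum_congr rfl
    intro j _
    apply Finset.sum_congr rfl
    intro k _
    rw [hSsymm k i]
    ring
  rw [this]
  exact hM _

open Filter Set Topology Matrix Finset in
private lemma zperiodic_exists_max {n : ℕ} {w : EuclideanSpace ℝ (Fin n) → ℝ}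
    (hc : Continuous w) (hper : ZPeriodic w) :
    ∃ y₀, ∀ y, w y ≤ w y₀ := by
  have hK : IsCompact (Metric.closedBall (0 : EuclideanSpace ℝ (Fin n)) (Real.sqrt n)) :=
    isCompact_closedBall _ _
  obtain ⟨y₀, hy₀K, hmax⟩ := hK.exists_isMaxOn
    ⟨0, Metric.mem_closedBall_self (Real.sqrt_nonneg _)⟩ hc.continuousOn
  refine ⟨y₀, fun y => ?_⟩
  set k : Fin n → ℤ := fun i => ⌊y i⌋ with hk
  set z : EuclideanSpace ℝ (Fin n) := y - intVec k with hz
  have hzi : ∀ i, z i = y i - (⌊y i⌋ : ℝ) := fun i => rfl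
  have hznorm : ‖z‖ ≤ Real.sqrt n := by
    rw [EuclideanSpace.norm_eq]
    apply Real.sqrt_le_sqrt
    calc (∑ i, ‖z i‖ ^ 2) ≤ ∑ _i : Fin n, (1:ℝ) := by
          apply Finset.sum_le_sum
          intro i _
          rw [hzi i]
          have : |y i - (⌊y i⌋ : ℝ)| ≤ 1 := by
            rw [abs_le]
            constructor <;> [linarith [Int.floor_le (y i)]; linarith [Int.lt_floor_add_one (y i)]]
          calc ‖y i - (⌊y i⌋:ℝ)‖ ^ 2 = |y i - (⌊y i⌋:ℝ)| ^ 2 := by rw [Real.norm_eq_abs]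
            _ ≤ 1 ^ 2 := by apply pow_le_pow_left₀ (abs_nonneg _) this
            _ = 1 := one_pow 2
      _ = n := by simp
  have hzK : z ∈ Metric.closedBall (0 : EuclideanSpace ℝ (Fin n)) (Real.sqrt n) := by
    rwa [Metric.mem_closedBall, dist_zero_right]
  have : w y = w z := by
    rw [hz]
    have := hper (y - intVec k) k
    rw [sub_add_cancel] at this
    exact this
  rw [this]
  exact hmax hzK

open Filter Set Topology Matrix Finset in
private lemma hessM_eq_bilinear {n : ℕ} {w : EuclideanSpace ℝ (Fin n) → ℝ}
    (hw : ContDiff ℝ 2 w) (y₀ : EuclideanSpace ℝ (Fin n)) (i j : Fin n) :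
    hessM w y₀ i j =
      fderiv ℝ (fderiv ℝ w) y₀ (EuclideanSpace.single i 1) (EuclideanSpace.single j 1) := by
  have hF : ContDiff ℝ 1 (fderiv ℝ w) := hw.fderiv_right (by norm_num)
  have hd : DifferentiableAt ℝ (fderiv ℝ w) y₀ := (hF.differentiable one_ne_zero) y₀
  have := fderiv_clm_apply hd (differentiableAt_const (EuclideanSpace.single j 1))
  rw [hessM, this]
  simp

open Filter Set Topology Matrix Finset in
private lemma directional_second_deriv_max {n : ℕ} {w : EuclideanSpace ℝ (Fin n) → ℝ}
    (hw : ContDiff ℝ 2 w) (y₀ : EuclideanSpace ℝ (Fin n)) (v : EuclideanSpace ℝ (Fin n))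
    (hmax : IsLocalMax w y₀) :
    fderiv ℝ (fderiv ℝ w) y₀ v v ≤ 0 := by
  have hF : ContDiff ℝ 1 (fderiv ℝ w) := hw.fderiv_right (by norm_num)
  set L : ℝ → EuclideanSpace ℝ (Fin n) := fun t => y₀ + t • v with hL
  have hLd : ∀ t, HasDerivAt L v t := by
    intro t
    have : HasDerivAt (fun s : ℝ => s • v) ((1:ℝ) • v) t := (hasDerivAt_id t).smul_const v
    exact (by simpa using this : HasDerivAt (fun s : ℝ => s • v) v t).const_add y₀
  have hL0 : L 0 = y₀ := by simp [hL]
  set g : ℝ → ℝ := fun t => w (L t) with hg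
  set g' : ℝ → ℝ := fun t => fderiv ℝ w (L t) v with hg'
  have hgd : ∀ t, HasDerivAt g (g' t) t := by
    intro t
    exact (((hw.differentiable two_ne_zero) (L t)).hasFDerivAt).comp_hasDerivAt t (hLd t)
  have hg'd : HasDerivAt g' (fderiv ℝ (fderiv ℝ w) y₀ v v) 0 := by
    have h1 : HasFDerivAt (fun z => fderiv ℝ w z v)
        ((fderiv ℝ (fderiv ℝ w) y₀).flip v) (L 0) := by
      rw [hL0]
      have hFd : HasFDerivAt (fderiv ℝ w) (fderiv ℝ (fderiv ℝ w) y₀) y₀ :=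
        ((hF.differentiable one_ne_zero) y₀).hasFDerivAt
      have := hFd.clm_apply (hasFDerivAt_const v y₀)
      simpa using this
    have h2 := h1.comp_hasDerivAt 0 (hLd 0)
    exact h2
  have hgmax : IsLocalMax g 0 := by
    have hLc : Tendsto L (𝓝 0) (𝓝 y₀) := by
      rw [← hL0]
      exact ((continuous_const.add (continuous_id.smul continuous_const)).tendsto 0)
    have := hLc.eventually hmax
    simpa [IsLocalMax, IsMaxFilter, hg, hL0] using this
  exact second_deriv_nonpos_of_isLocalMax hgd hg'd hgmax

open Filter Set Topology Matrix Finset in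
private lemma quadform_hessM {n : ℕ} {w : EuclideanSpace ℝ (Fin n) → ℝ}
    (hw : ContDiff ℝ 2 w) (y₀ : EuclideanSpace ℝ (Fin n)) (u : Fin n → ℝ) :
    u ⬝ᵥ (hessM w y₀ *ᵥ u) =
      fderiv ℝ (fderiv ℝ w) y₀ ((WithLp.equiv 2 (Fin n → ℝ)).symm u)
        ((WithLp.equiv 2 (Fin n → ℝ)).symm u) := by
  set v : EuclideanSpace ℝ (Fin n) := (WithLp.equiv 2 (Fin n → ℝ)).symm u with hv
  have hvi : ∀ i, v i = u i := fun i => rfl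
  have hsum : v = ∑ i, u i • EuclideanSpace.single i 1 := by
    have := (EuclideanSpace.basisFun (Fin n) ℝ).sum_repr v
    simp only [EuclideanSpace.basisFun_repr, EuclideanSpace.basisFun_apply, hvi] at this
    exact this.symm
  calc u ⬝ᵥ (hessM w y₀ *ᵥ u)
      = ∑ i, ∑ j, u i * (fderiv ℝ (fderiv ℝ w) y₀ (EuclideanSpace.single i 1)
          (EuclideanSpace.single j 1) * u j) := by
        simp only [dotProduct, Matrix.mulVec, dotProduct, Finset.mul_sum]
        apply Finset.sum_congr rfl
        intro i _
        apply Finset.sum_congr rfl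
        intro j _
        rw [hessM_eq_bilinear hw y₀ i j]
    _ = fderiv ℝ (fderiv ℝ w) y₀ v v := by
        conv_rhs => rw [hsum]
        simp only [map_sum, _root_.map_smul, ContinuousLinearMap.sum_apply,
          ContinuousLinearMap.smul_apply, smul_eq_mul, Finset.mul_sum]
        rw [Finset.sum_comm]
        apply Finset.sum_congr rfl
        intro i _
        apply Finset.sum_congr rfl
        intro j _
        ring

/-- Bounds on the effective Hamiltonian value under quadratic growth of `H`. -/
theorem effective_value_bounds
    (n : ℕ) (hn : 1 ≤ n)
    (A : EuclideanSpace ℝ (Fin n) → Matrix (Fin n) (Fin n) ℝ)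
    (hAsymm : ∀ y, (A y).IsSymm) (hApsd : ∀ y, (A y).PosSemidef)
    (H : EuclideanSpace ℝ (Fin n) → EuclideanSpace ℝ (Fin n) → ℝ)
    (α β α' β' : ℝ) (hα : 0 < α) (hβ : 0 < β) (hα' : 0 ≤ α') (hβ' : 0 ≤ β')
    (hgrowth : ∀ q y, α * ‖q‖ ^ 2 - α' ≤ H q y ∧ H q y ≤ β * ‖q‖ ^ 2 + β')
    (p : EuclideanSpace ℝ (Fin n)) (γ : ℝ)
    (w : EuclideanSpace ℝ (Fin n) → ℝ)
    (hw : ContDiff ℝ 2 w) (hwper : ZPeriodic w)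
    (heq : ∀ y, -((A y) * hessM w y).trace + H (gradient w y + p) y = γ) :
    α * ‖p‖ ^ 2 - α' ≤ γ ∧ γ ≤ β * ‖p‖ ^ 2 + β' := by
  constructor
  · -- lower bound: use a global max point
    obtain ⟨y₀, hmax⟩ := zperiodic_exists_max hw.continuous hwper
    have hlmax : IsLocalMax w y₀ := Filter.Eventually.of_forall (fun y => hmax y)
    have hfz : fderiv ℝ w y₀ = 0 := hlmax.fderiv_eq_zero
    have hgrad : gradient w y₀ = 0 := by
      simp [gradient, hfz]
    have htr : ((A y₀) * hessM w y₀).trace ≤ 0 := by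
      have h0 : 0 ≤ ((A y₀) * (-(hessM w y₀))).trace := by
        apply trace_mul_nonneg_of_posSemidef (hApsd y₀)
        intro u
        have h1 := quadform_hessM hw y₀ u
        have h2 := directional_second_deriv_max hw y₀ ((WithLp.equiv 2 (Fin n → ℝ)).symm u) hlmax
        rw [Matrix.neg_mulVec, dotProduct_neg, h1]
        linarith
      rw [Matrix.mul_neg, Matrix.trace_neg] at h0
      linarith
    have hy := heq y₀
    rw [hgrad, zero_add] at hy
    have hH := (hgrowth p y₀).1
    linarith
  · -- upper bound: use a global min point
    obtain ⟨y₁, hmin'⟩ := zperiodic_exists_max (hw.continuous.neg)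
      (fun y k => by simp [hwper y k])
    have hmin : ∀ y, w y₁ ≤ w y := fun y => by have := hmin' y; simpa using this
    have hlmin : IsLocalMin w y₁ := Filter.Eventually.of_forall (fun y => hmin y)
    have hfz : fderiv ℝ w y₁ = 0 := hlmin.fderiv_eq_zero
    have hgrad : gradient w y₁ = 0 := by
      simp [gradient, hfz]
    have htr : 0 ≤ ((A y₁) * hessM w y₁).trace := by
      apply trace_mul_nonneg_of_posSemidef (hApsd y₁)
      intro u
      have h1 := quadform_hessM hw y₁ u
      have h2 := directional_second_deriv_max hw.neg y₁
        ((WithLp.equiv 2 (Fin n → ℝ)).symm u) hlmin.neg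
      have hneg : ∀ z v v', fderiv ℝ (fderiv ℝ (fun x => -w x)) z v v'
          = -(fderiv ℝ (fderiv ℝ w) z v v') := by
        intro z v v'
        have hh : (fderiv ℝ (fun x => -w x)) = fun x => -(fderiv ℝ w x) := by
          funext x
          exact fderiv_neg
        rw [hh]
        have hd : DifferentiableAt ℝ (fderiv ℝ w) z :=
          ((hw.fderiv_right (m := 1) (by norm_num)).differentiable one_ne_zero) z
        rw [fderiv_fun_neg]
        simp [ContinuousLinearMap.neg_apply]
      have h2' := h2
      rw [hneg] at h2'
      rw [h1]
      linarith
    have hy := heq y₁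
    rw [hgrad, zero_add] at hy
    have hH := (hgrowth p y₁).2
    linarith
end

section
/- Let n ≥ 1, δ > 0, let A : ℝ^n → Sym_n(ℝ) with A(y) positive semidefinite for every y, let H : ℝ^n × ℝ^n → ℝ, and fix p ∈ ℝ^n. Suppose u, v : ℝ^n → ℝ are C², ℤ^n-periodic and satisfy −tr(A(y) D²u(y)) + H(∇u(y) + p, y) + δ u(y) ≤ 0 and −tr(A(y) D²v(y)) + H(∇v(y) + p, y) + δ v(y) ≥ 0 for all y ∈ ℝ^n. Then u(y) ≤ v(y) for all y ∈ ℝ^n. (Comparison principle for the δ-penalized cell equation.) -/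
open scoped InnerProductSpace

section AuxLemmas
open Filter Set Topology Matrix

lemma sndDeriv_nonpos_of_isLocalMax (g : ℝ → ℝ) (hg : ContDiff ℝ 2 g)
    (hmax : IsLocalMax g 0) : deriv (deriv g) 0 ≤ 0 := by
  by_contra hc
  push_neg at hc
  have hgd : Differentiable ℝ g := hg.differentiable two_ne_zero
  have hg' : ContDiff ℝ 1 (deriv g) := by
    have := (contDiff_succ_iff_deriv (n := 1)).mp (by exact_mod_cast hg)
    exact this.2.2
  have h0 : deriv g 0 = 0 := hmax.deriv_eq_zero
  have hda : HasDerivAt (deriv g) (deriv (deriv g) 0) 0 :=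
    ((hg'.differentiable one_ne_zero) 0).hasDerivAt
  have hslope : Tendsto (slope (deriv g) 0) (𝓝[≠] 0) (𝓝 (deriv (deriv g) 0)) :=
    hasDerivAt_iff_tendsto_slope.mp hda
  have hpos : ∀ᶠ t in 𝓝[>] (0:ℝ), 0 < deriv g t := by
    have h1 : ∀ᶠ t in 𝓝[≠] (0:ℝ), 0 < slope (deriv g) 0 t :=
      hslope.eventually (eventually_gt_nhds hc)
    have h2 : ∀ᶠ t in 𝓝[>] (0:ℝ), 0 < slope (deriv g) 0 t :=
      h1.filter_mono (nhdsWithin_mono 0 (fun t ht => ne_of_gt ht))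
    filter_upwards [h2, self_mem_nhdsWithin] with t ht ht0
    have : slope (deriv g) 0 t = deriv g t / t := by simp [slope_def_field, h0]
    rw [this] at ht
    exact (div_pos_iff.mp ht).elim (fun h => h.1) (fun h => absurd h.2 (not_lt.mpr ht0.le))
  have hle : ∀ᶠ t in 𝓝[>] (0:ℝ), g t ≤ g 0 :=
    (hmax.filter_mono nhdsWithin_le_nhds)
  obtain ⟨ε, (hε : (0:ℝ) < ε), hεsub⟩ := (mem_nhdsGT_iff_exists_Ioo_subset).mp (hpos.and hle)
  have hmono : StrictMonoOn g (Set.Icc 0 (ε/2)) := by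
    apply strictMonoOn_of_deriv_pos (convex_Icc 0 (ε/2)) hgd.continuous.continuousOn
    intro x hx
    rw [interior_Icc] at hx
    exact (hεsub ⟨hx.1, hx.2.trans (half_lt_self hε)⟩).1
  have h1 : g 0 < g (ε/2) := by
    apply hmono (Set.left_mem_Icc.mpr (by linarith [hε.le])) ⟨(half_pos hε).le, le_rfl⟩ (half_pos hε)
  have h2 : g (ε/2) ≤ g 0 := (hεsub ⟨half_pos hε, half_lt_self hε⟩).2
  linarith

open scoped MatrixOrder in
lemma psd_trace_nonneg {m : ℕ} {A B : Matrix (Fin m) (Fin m) ℝ}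
    (hA : A.PosSemidef) (hB : B.PosSemidef) : 0 ≤ (A * B).trace := by
  set S := CFC.sqrt A with hSdef
  have hsq : S * S = A := by
    exact CFC.sqrt_mul_sqrt_self A hA.nonneg
  have hSh : Sᴴ = S := (CFC.sqrt_nonneg A).posSemidef.isHermitian
  have hpsd : (S * B * Sᴴ).PosSemidef := hB.mul_mul_conjTranspose_same S
  have htr : (A * B).trace = (S * B * Sᴴ).trace := by
    rw [hSh, ← hsq]; exact (Matrix.trace_mul_cycle S B S).symm
  rw [htr]
  rw [Matrix.trace]
  apply Finset.sum_nonneg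
  intro i _
  have := hpsd.dotProduct_mulVec_nonneg (Pi.single i 1)
  simpa [dotProduct, Matrix.mulVec, Matrix.diag, Pi.single_apply,
    Finset.sum_ite_eq, Finset.sum_ite_eq'] using this

end AuxLemmas

open Filter Set Topology Matrix in
/-- Comparison principle for the δ-penalized cell equation: a classical periodic
subsolution lies below a classical periodic supersolution. -/
theorem penalized_comparison
    (n : ℕ) (hn : 1 ≤ n) (δ : ℝ) (hδ : 0 < δ)
    (A : EuclideanSpace ℝ (Fin n) → Matrix (Fin n) (Fin n) ℝ)
    (hAsymm : ∀ y, (A y).IsSymm) (hApsd : ∀ y, (A y).PosSemidef)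
    (H : EuclideanSpace ℝ (Fin n) → EuclideanSpace ℝ (Fin n) → ℝ)
    (p : EuclideanSpace ℝ (Fin n))
    (u v : EuclideanSpace ℝ (Fin n) → ℝ)
    (hu : ContDiff ℝ 2 u) (hv : ContDiff ℝ 2 v)
    (huper : ZPeriodic u) (hvper : ZPeriodic v)
    (hsub : ∀ y, -((A y) * hessM u y).trace + H (gradient u y + p) y + δ * u y ≤ 0)
    (hsuper : ∀ y, 0 ≤ -((A y) * hessM v y).trace + H (gradient v y + p) y + δ * v y) :
    ∀ y, u y ≤ v y := by
  classical
  set w : EuclideanSpace ℝ (Fin n) → ℝ := fun y => u y - v y with hwdef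
  have hwC : ContDiff ℝ 2 w := hu.sub hv
  have hwper : ZPeriodic w := fun y k => by simp only [hwdef, huper y k, hvper y k]
  -- compactness and global max
  set φ := (EuclideanSpace.equiv (Fin n) ℝ) with hφ
  set K : Set (EuclideanSpace ℝ (Fin n)) := φ.symm '' (Set.Icc 0 1) with hK
  have hKc : IsCompact K := isCompact_Icc.image φ.symm.continuous
  have hK0 : K.Nonempty := ⟨φ.symm 0, ⟨0, ⟨le_rfl, zero_le_one⟩, rfl⟩⟩
  obtain ⟨y₀, hy₀K, hy₀max⟩ := hKc.exists_isMaxOn hK0 hwC.continuous.continuousOn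
  have hglobal : ∀ y, w y ≤ w y₀ := by
    intro y
    set k : Fin n → ℤ := fun i => ⌊y i⌋ with hk
    set z : EuclideanSpace ℝ (Fin n) := y - intVec k with hz
    have hzi : ∀ i, z i = y i - ⌊y i⌋ := by
      intro i
      simp [hz, intVec, hk, WithLp.equiv_symm_apply, PiLp.toLp_apply, PiLp.sub_apply]
    have hzK : z ∈ K := by
      refine ⟨fun i => y i - ⌊y i⌋, ⟨?_, ?_⟩, ?_⟩
      · intro i; simp [sub_nonneg, Int.floor_le]
      · intro i
        simp only [Pi.one_apply]
        have := Int.lt_floor_add_one (y i)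
        linarith
      · ext i
        rw [hzi i]
        rfl
    have hyz : y = z + intVec k := by rw [hz]; abel
    calc w y = w (z + intVec k) := by rw [← hyz]
    _ = w z := hwper z k
    _ ≤ w y₀ := hy₀max hzK
  have hlmax : IsLocalMax w y₀ := Filter.Eventually.of_forall hglobal
  -- first-order condition
  have hud : Differentiable ℝ u := hu.differentiable two_ne_zero
  have hvd : Differentiable ℝ v := hv.differentiable two_ne_zero
  have hwd : Differentiable ℝ w := hwC.differentiable two_ne_zero
  have hf0 : fderiv ℝ w y₀ = 0 := hlmax.fderiv_eq_zero
  have hfsub : ∀ z, fderiv ℝ w z = fderiv ℝ u z - fderiv ℝ v z := by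
    intro z; exact fderiv_sub (hud z) (hvd z)
  have hfuv : fderiv ℝ u y₀ = fderiv ℝ v y₀ := by
    have := hfsub y₀; rw [hf0] at this
    exact (sub_eq_zero.mp this.symm)
  have hgrad : gradient u y₀ = gradient v y₀ := by
    simp only [gradient, hfuv]
  -- second-order condition
  have hw1 : ContDiff ℝ 1 (fderiv ℝ w) := hwC.fderiv_right (le_refl 2)
  have hw1d : Differentiable ℝ (fderiv ℝ w) := hw1.differentiable one_ne_zero
  set f2 := fderiv ℝ (fderiv ℝ w) y₀ with hf2
  have hF : ∀ (d y : EuclideanSpace ℝ (Fin n)), HasFDerivAt (fun z => fderiv ℝ w z d)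
      ((fderiv ℝ (fderiv ℝ w) y).flip d) y := by
    intro d y
    have := ((hw1d y).hasFDerivAt.clm_apply (hasFDerivAt_const d y))
    simpa using this
  have hquad : ∀ d : EuclideanSpace ℝ (Fin n), f2 d d ≤ 0 := by
    intro d
    set L : ℝ → EuclideanSpace ℝ (Fin n) := fun s => y₀ + s • d with hL
    have hline : ∀ t : ℝ, HasDerivAt L d t := by
      intro t
      have : HasDerivAt (fun s : ℝ => s • d) ((1:ℝ) • d) t := (hasDerivAt_id t).smul_const d
      simpa [hL] using this.const_add y₀
    have hL0 : L 0 = y₀ := by simp [hL]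
    set g : ℝ → ℝ := fun t => w (L t) with hg
    have hgC : ContDiff ℝ 2 g :=
      hwC.comp (contDiff_const.add (contDiff_id.smul contDiff_const))
    have hgmax : IsLocalMax g 0 := by
      have h0 : IsLocalMax w (L 0) := hL0.symm ▸ hlmax
      exact h0.comp_continuous (hline 0).continuousAt
    have hg1 : ∀ t, HasDerivAt g (fderiv ℝ w (L t) d) t := by
      intro t
      exact ((hwd (L t)).hasFDerivAt.comp_hasDerivAt t (hline t))
    have hgderiv : deriv g = fun t => fderiv ℝ w (L t) d := funext fun t => (hg1 t).deriv
    have hg2 : HasDerivAt (fun t => fderiv ℝ w (L t) d) (f2 d d) 0 := by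
      have h := (hF d (L 0)).comp_hasDerivAt 0 (hline 0)
      rw [hL0] at h
      exact h
    have : deriv (deriv g) 0 = f2 d d := by
      rw [hgderiv]
      exact hg2.deriv
    rw [← this]
    exact sndDeriv_nonpos_of_isLocalMax g hgC hgmax
  have hsymm2 : ∀ a b, f2 a b = f2 b a := by
    intro a b
    exact (hwC.contDiffAt.isSymmSndFDerivAt (by simp)).eq a b
  -- hessM w entries
  have hWentry : ∀ i j, hessM w y₀ i j = f2 (EuclideanSpace.single i 1) (EuclideanSpace.single j 1) := by
    intro i j
    have := (hF (EuclideanSpace.single j 1) y₀).fderiv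
    rw [hessM, this]
    rfl
  -- hessM of difference
  have hu1d : Differentiable ℝ (fderiv ℝ u) := (hu.fderiv_right (le_refl 2)).differentiable one_ne_zero
  have hv1d : Differentiable ℝ (fderiv ℝ v) := (hv.fderiv_right (le_refl 2)).differentiable one_ne_zero
  have hWdiff : hessM w y₀ = hessM u y₀ - hessM v y₀ := by
    ext i j
    have heq : (fun z => fderiv ℝ w z (EuclideanSpace.single j 1)) =
        fun z => fderiv ℝ u z (EuclideanSpace.single j 1) - fderiv ℝ v z (EuclideanSpace.single j 1) := by
      funext z; rw [hfsub z]; rfl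
    have hdu : DifferentiableAt ℝ (fun z => fderiv ℝ u z (EuclideanSpace.single j 1)) y₀ :=
      (hu1d y₀).clm_apply (differentiableAt_const _)
    have hdv : DifferentiableAt ℝ (fun z => fderiv ℝ v z (EuclideanSpace.single j 1)) y₀ :=
      (hv1d y₀).clm_apply (differentiableAt_const _)
    simp only [hessM, Matrix.sub_apply, heq]
    rw [fderiv_fun_sub hdu hdv]
    rfl
  -- negative semidefiniteness of hessM w y₀
  set M := hessM w y₀ with hM
  have hMentry := hWentry
  have hMneg : ∀ x : Fin n → ℝ, x ⬝ᵥ (M *ᵥ x) ≤ 0 := by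
    intro x
    set d : EuclideanSpace ℝ (Fin n) := ∑ i, x i • EuclideanSpace.single i 1 with hd
    have h1 : f2 d d = ∑ i, ∑ j, x i * (x j * f2 (EuclideanSpace.single i 1) (EuclideanSpace.single j 1)) := by
      simp only [hd, map_sum, _root_.map_smul, ContinuousLinearMap.sum_apply,
        ContinuousLinearMap.smul_apply, smul_eq_mul, Finset.mul_sum, Finset.sum_mul]
      rw [Finset.sum_comm]
      refine Finset.sum_congr rfl fun i _ => ?_
      refine Finset.sum_congr rfl fun j _ => ?_
      ring
    have h2 : x ⬝ᵥ (M *ᵥ x) = ∑ i, ∑ j, x i * (x j * f2 (EuclideanSpace.single i 1) (EuclideanSpace.single j 1)) := by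
      simp only [dotProduct, Matrix.mulVec, hMentry]
      congr 1; funext i
      rw [Finset.mul_sum]
      congr 1; funext j
      ring
    rw [h2, ← h1]
    exact hquad d
  have hNpsd : (-M).PosSemidef := by
    refine Matrix.PosSemidef.of_dotProduct_mulVec_nonneg ?_ ?_
    · ext i j
      simp only [Matrix.conjTranspose_apply, Matrix.neg_apply, star_trivial]
      rw [hMentry j i, hMentry i j, hsymm2]
    · intro x
      have := hMneg x
      simp only [Matrix.neg_mulVec, dotProduct_neg, star_trivial]
      linarith
  have htr : ((A y₀) * M).trace ≤ 0 := by
    have h := psd_trace_nonneg (hApsd y₀) hNpsd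
    rw [Matrix.mul_neg, Matrix.trace_neg] at h
    linarith
  -- conclusion
  have hkey : u y₀ - v y₀ ≤ 0 := by
    have h1 := hsub y₀
    have h2 := hsuper y₀
    have h3 : ((A y₀) * hessM u y₀).trace - ((A y₀) * hessM v y₀).trace = ((A y₀) * M).trace := by
      rw [hWdiff, Matrix.mul_sub, Matrix.trace_sub]
    rw [hgrad] at h1
    have h4 : δ * (u y₀ - v y₀) ≤ 0 := by
      have := htr
      rw [← h3] at this
      linarith
    have h5 := (mul_le_mul_iff_right₀ hδ).mp (by linarith : δ * (u y₀ - v y₀) ≤ δ * 0)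
    linarith
  intro y
  have := hglobal y
  simp only [hwdef] at this hkey ⊢
  linarith
end

section
/- Let n ≥ 1, let A : ℝ^n → Sym_n(ℝ) with A(y) positive semidefinite for every y, and let H : ℝ^n × ℝ^n → ℝ be differentiable in its first variable with gradient bound ‖∇_q H(q, y)‖ ≤ K(1 + |q|) for all (q, y), where K > 0. Fix p, q ∈ ℝ^n, γ_p, γ_q ∈ ℝ, and G ≥ 0. Suppose w_p, w_q : ℝ^n → ℝ are C², ℤ^n-periodic functions with ‖∇w_p(y)‖ ≤ G and ‖∇w_q(y)‖ ≤ G for all y, satisfying −tr(A(y) D²w_p(y)) + H(∇w_p(y) + p, y) = γ_p and −tr(A(y) D²w_q(y)) + H(∇w_q(y) + q, y) = γ_q for all y ∈ ℝ^n. Then |γ_p − γ_q| ≤ K(1 + G + |p| + |q|) |p − q|. (Local Lipschitz continuity of the effective Hamiltonian.) -/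
open scoped InnerProductSpace

open Matrix in
lemma aux_trace_nonpos {n : ℕ} {M N : Matrix (Fin n) (Fin n) ℝ} (hM : M.PosSemidef)
    (hN : ∀ x : Fin n → ℝ, x ⬝ᵥ N.mulVec x ≤ 0) : (M * N).trace ≤ 0 := by
  obtain ⟨B, rfl⟩ : ∃ B : Matrix (Fin n) (Fin n) ℝ, M = Bᴴ * B := by
    open scoped MatrixOrder in
    obtain ⟨B, hB⟩ := CStarAlgebra.nonneg_iff_eq_star_mul_self.mp hM.nonneg
    exact ⟨B, hB⟩
  have key : (Bᴴ * B * N).trace = ∑ k : Fin n, (fun j => B k j) ⬝ᵥ N.mulVec (fun j => B k j) := by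
    simp only [Matrix.trace, Matrix.diag, Matrix.mul_apply, Matrix.conjTranspose_apply,
      dotProduct, Matrix.mulVec, RCLike.star_def, starRingEnd_apply, star_trivial,
      Finset.sum_mul, Finset.mul_sum]
    calc ∑ a : Fin n, ∑ b : Fin n, ∑ c : Fin n, B c a * B c b * N b a
        = ∑ a : Fin n, ∑ c : Fin n, ∑ b : Fin n, B c a * B c b * N b a :=
          Finset.sum_congr rfl fun a _ => Finset.sum_comm
      _ = ∑ c : Fin n, ∑ a : Fin n, ∑ b : Fin n, B c a * B c b * N b a := Finset.sum_comm
      _ = ∑ c : Fin n, ∑ b : Fin n, ∑ a : Fin n, B c a * B c b * N b a :=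
          Finset.sum_congr rfl fun c _ => Finset.sum_comm
      _ = ∑ x : Fin n, ∑ x_1 : Fin n, ∑ i : Fin n, B x x_1 * (N x_1 i * B x i) := by
          refine Finset.sum_congr rfl fun c _ => Finset.sum_congr rfl fun b _ =>
            Finset.sum_congr rfl fun a _ => by ring
  rw [key]
  exact Finset.sum_nonpos fun k _ => hN _

lemma aux_second_deriv_nonpos_at_max {g g' : ℝ → ℝ} {c : ℝ}
    (hg : ∀ t, HasDerivAt g (g' t) t) (hc : HasDerivAt g' c 0)
    (hmax : ∀ t, g t ≤ g 0) : c ≤ 0 := by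
  by_contra hpos
  push_neg at hpos
  have hg'0 : g' 0 = 0 := by
    have hloc : IsLocalMax g 0 := Filter.Eventually.of_forall hmax
    have := hloc.deriv_eq_zero
    rwa [(hg 0).deriv] at this
  have hslope : Filter.Tendsto (slope g' 0) (nhdsWithin 0 {(0:ℝ)}ᶜ) (nhds c) :=
    hasDerivAt_iff_tendsto_slope.mp hc
  have hev : ∀ᶠ t in nhdsWithin 0 {(0:ℝ)}ᶜ, 0 < slope g' 0 t :=
    hslope.eventually (eventually_gt_nhds hpos)
  have hev' : ∀ᶠ t in nhdsWithin (0:ℝ) (Set.Ioi 0), 0 < slope g' 0 t :=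
    hev.filter_mono (nhdsWithin_mono 0 (fun t ht => ne_of_gt ht))
  obtain ⟨u, hu, hsub⟩ := mem_nhdsGT_iff_exists_Ioo_subset.mp hev'
  have hupos : (0:ℝ) < u := hu
  have hgpos : ∀ t ∈ Set.Ioo (0:ℝ) u, 0 < g' t := by
    intro t ht
    have h1 : 0 < slope g' 0 t := hsub ht
    rw [slope_def_field, hg'0, sub_zero, sub_zero, div_pos_iff] at h1
    rcases h1 with ⟨h1, _⟩ | ⟨_, h2⟩
    · exact h1
    · exact absurd ht.1 (not_lt.mpr h2.le)
  set b : ℝ := u / 2 with hb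
  have hb0 : 0 < b := by positivity
  have hbu : b < u := by simp [hb]; linarith
  have hmono : StrictMonoOn g (Set.Icc 0 b) := by
    apply strictMonoOn_of_deriv_pos (convex_Icc 0 b)
    · exact continuousOn_of_forall_continuousAt (fun t _ => (hg t).continuousAt)
    · intro t ht
      rw [interior_Icc] at ht
      rw [(hg t).deriv]
      exact hgpos t ⟨ht.1, ht.2.trans hbu⟩
  have : g 0 < g b := hmono (Set.left_mem_Icc.mpr hb0.le) (Set.right_mem_Icc.mpr hb0.le) hb0
  exact absurd (hmax b) (not_le.mpr this)

lemma aux_zper_exists_max {n : ℕ} {f : EuclideanSpace ℝ (Fin n) → ℝ}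
    (hf : Continuous f) (hper : ZPeriodic f) : ∃ y0, ∀ y, f y ≤ f y0 := by
  set e := (WithLp.equiv 2 (Fin n → ℝ)).symm with he
  have hecont : Continuous e :=
    (PiLp.continuousLinearEquiv 2 ℝ (fun _ : Fin n => ℝ)).symm.continuous
  have hC : IsCompact (e '' Set.Icc (0 : Fin n → ℝ) 1) := isCompact_Icc.image hecont
  have hne : (e '' Set.Icc (0 : Fin n → ℝ) 1).Nonempty :=
    ⟨e 0, Set.mem_image_of_mem e (Set.left_mem_Icc.mpr zero_le_one)⟩
  obtain ⟨y0, hy0mem, hy0⟩ := hC.exists_isMaxOn hne hf.continuousOn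
  refine ⟨y0, fun y => ?_⟩
  have hmem : y + intVec (fun i => -⌊y i⌋) ∈ e '' Set.Icc (0 : Fin n → ℝ) 1 := by
    refine ⟨fun i => Int.fract (y i), ?_, ?_⟩
    · exact ⟨fun i => Int.fract_nonneg _, fun i => (Int.fract_lt_one _).le⟩
    · ext i
      show Int.fract (y i) = y i + (((-⌊y i⌋) : ℤ) : ℝ)
      push_cast
      rw [Int.fract]
      ring
  calc f y = f (y + intVec (fun i => -⌊y i⌋)) := (hper y _).symm
    _ ≤ f y0 := hy0 hmem

lemma aux_hessM_eq {n : ℕ} {v : EuclideanSpace ℝ (Fin n) → ℝ} (hv : ContDiff ℝ 2 v)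
    (y0 : EuclideanSpace ℝ (Fin n)) (i j : Fin n) :
    hessM v y0 i j = fderiv ℝ (fderiv ℝ v) y0 (EuclideanSpace.single i 1)
      (EuclideanSpace.single j 1) := by
  have hf1 : Differentiable ℝ (fderiv ℝ v) := (hv.fderiv_right (m := 1) (by norm_num)).differentiable one_ne_zero
  have h := fderiv_clm_apply (hf1.differentiableAt (x := y0))
    (differentiableAt_const (EuclideanSpace.single j 1))
  rw [hessM, h]
  simp

lemma aux_dirderiv2_nonpos {n : ℕ} {v : EuclideanSpace ℝ (Fin n) → ℝ} (hv : ContDiff ℝ 2 v)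
    {y0 : EuclideanSpace ℝ (Fin n)} (hmax : ∀ y, v y ≤ v y0)
    (d : EuclideanSpace ℝ (Fin n)) :
    fderiv ℝ (fderiv ℝ v) y0 d d ≤ 0 := by
  have hf1 : Differentiable ℝ (fderiv ℝ v) := (hv.fderiv_right (m := 1) (by norm_num)).differentiable one_ne_zero
  have hvd : Differentiable ℝ v := hv.differentiable (by norm_num)
  set α : ℝ → EuclideanSpace ℝ (Fin n) := fun t => y0 + t • d with hα
  have hαd : ∀ t : ℝ, HasDerivAt α d t := by
    intro t
    have := ((hasDerivAt_id t).smul_const d).const_add y0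
    simpa [hα] using this
  set g' : ℝ → ℝ := fun t => fderiv ℝ v (α t) d with hg'
  have hg : ∀ t : ℝ, HasDerivAt (fun s => v (α s)) (g' t) t := fun t =>
    (hvd (α t)).hasFDerivAt.comp_hasDerivAt t (hαd t)
  have hα0 : α 0 = y0 := by simp [hα]
  have hc : HasDerivAt g' (fderiv ℝ (fderiv ℝ v) y0 d d) 0 := by
    have h2 : HasFDerivAt (fun z => fderiv ℝ v z d)
        ((fderiv ℝ (fderiv ℝ v) y0).flip d) y0 := by
      have := (hf1.differentiableAt (x := y0)).hasFDerivAt.clm_apply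
        (hasFDerivAt_const d y0)
      simpa using this
    have h2' : HasFDerivAt (fun z => fderiv ℝ v z d)
        ((fderiv ℝ (fderiv ℝ v) y0).flip d) (α 0) := hα0 ▸ h2
    have h3 := h2'.comp_hasDerivAt 0 (hαd 0)
    simpa [hg', Function.comp_def] using h3
  have hmax' : ∀ t : ℝ, v (α t) ≤ v (α 0) := by
    intro t; rw [hα0]; exact hmax _
  exact aux_second_deriv_nonpos_at_max hg hc hmax'

lemma aux_hess_qf_nonpos {n : ℕ} {v : EuclideanSpace ℝ (Fin n) → ℝ} (hv : ContDiff ℝ 2 v)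
    {y0 : EuclideanSpace ℝ (Fin n)} (hmax : ∀ y, v y ≤ v y0) (x : Fin n → ℝ) :
    dotProduct x ((hessM v y0).mulVec x) ≤ 0 := by
  set D := fderiv ℝ (fderiv ℝ v) y0 with hD
  set d : EuclideanSpace ℝ (Fin n) := ∑ i, x i • EuclideanSpace.single i 1 with hd
  have key : dotProduct x ((hessM v y0).mulVec x) = D d d := by
    rw [hd]
    simp only [map_sum, map_smul, ContinuousLinearMap.sum_apply, ContinuousLinearMap.smul_apply,
      ContinuousLinearMap.coe_sum', ContinuousLinearMap.coe_smul', Pi.smul_apply,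
      Finset.sum_apply, smul_eq_mul]
    simp only [dotProduct, Matrix.mulVec, aux_hessM_eq hv, ← hD]
    simp only [Finset.mul_sum]
    rw [Finset.sum_comm]
    exact Finset.sum_congr rfl fun a _ => Finset.sum_congr rfl fun b _ => by ring
  rw [key]
  exact aux_dirderiv2_nonpos hv hmax d

lemma aux_gradient_def {n : ℕ} (f : EuclideanSpace ℝ (Fin n) → ℝ) (x : EuclideanSpace ℝ (Fin n)) :
    gradient f x = (InnerProductSpace.toDual ℝ (EuclideanSpace ℝ (Fin n))).symm
      (fderiv ℝ f x) := rfl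

lemma aux_norm_gradient {n : ℕ} (f : EuclideanSpace ℝ (Fin n) → ℝ)
    (x : EuclideanSpace ℝ (Fin n)) : ‖gradient f x‖ = ‖fderiv ℝ f x‖ := by
  rw [aux_gradient_def]
  exact LinearIsometryEquiv.norm_map _ _

lemma aux_hessM_sub {n : ℕ} {wp wq : EuclideanSpace ℝ (Fin n) → ℝ}
    (hwp : ContDiff ℝ 2 wp) (hwq : ContDiff ℝ 2 wq) (y0 : EuclideanSpace ℝ (Fin n)) :
    hessM (fun y => wq y - wp y) y0 = hessM wq y0 - hessM wp y0 := by
  have hfq : Differentiable ℝ (fderiv ℝ wq) :=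
    (hwq.fderiv_right (m := 1) (by norm_num)).differentiable one_ne_zero
  have hfp : Differentiable ℝ (fderiv ℝ wp) :=
    (hwp.fderiv_right (m := 1) (by norm_num)).differentiable one_ne_zero
  have hdq : Differentiable ℝ wq := hwq.differentiable (by norm_num)
  have hdp : Differentiable ℝ wp := hwp.differentiable (by norm_num)
  funext i j
  have hinner : (fun z => fderiv ℝ (fun y => wq y - wp y) z (EuclideanSpace.single j 1)) =
      fun z => fderiv ℝ wq z (EuclideanSpace.single j 1)
        - fderiv ℝ wp z (EuclideanSpace.single j 1) := by
    funext z
    rw [fderiv_fun_sub (hdq z) (hdp z)]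
    rfl
  have hdq' : Differentiable ℝ (fun z => fderiv ℝ wq z (EuclideanSpace.single j 1)) :=
    hfq.clm_apply (differentiable_const _)
  have hdp' : Differentiable ℝ (fun z => fderiv ℝ wp z (EuclideanSpace.single j 1)) :=
    hfp.clm_apply (differentiable_const _)
  show hessM (fun y => wq y - wp y) y0 i j = hessM wq y0 i j - hessM wp y0 i j
  rw [hessM, hessM, hessM, hinner, fderiv_fun_sub (hdq' y0) (hdp' y0)]
  rfl

lemma aux_one_sided
    (n : ℕ)
    (A : EuclideanSpace ℝ (Fin n) → Matrix (Fin n) (Fin n) ℝ)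
    (hApsd : ∀ y, (A y).PosSemidef)
    (H : EuclideanSpace ℝ (Fin n) → EuclideanSpace ℝ (Fin n) → ℝ)
    (K : ℝ) (hK : 0 < K)
    (hHdiff : ∀ y, Differentiable ℝ (fun q => H q y))
    (hHgrad : ∀ q y, ‖gradient (fun q' => H q' y) q‖ ≤ K * (1 + ‖q‖))
    (p q : EuclideanSpace ℝ (Fin n)) (γp γq : ℝ) (G : ℝ) (hG : 0 ≤ G)
    (wp wq : EuclideanSpace ℝ (Fin n) → ℝ)
    (hwp : ContDiff ℝ 2 wp) (hwq : ContDiff ℝ 2 wq)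
    (hwpper : ZPeriodic wp) (hwqper : ZPeriodic wq)
    (hwpgrad : ∀ y, ‖gradient wp y‖ ≤ G)
    (heqp : ∀ y, -((A y) * hessM wp y).trace + H (gradient wp y + p) y = γp)
    (heqq : ∀ y, -((A y) * hessM wq y).trace + H (gradient wq y + q) y = γq) :
    γp - γq ≤ K * (1 + G + ‖p‖ + ‖q‖) * ‖p - q‖ := by
  set v : EuclideanSpace ℝ (Fin n) → ℝ := fun y => wq y - wp y with hv_def
  have hv : ContDiff ℝ 2 v := hwq.sub hwp
  have hvper : ZPeriodic v := fun y k => by simp only [hv_def, hwqper y k, hwpper y k]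
  obtain ⟨y0, hy0⟩ := aux_zper_exists_max hv.continuous hvper
  -- gradients agree at y0
  have hdq : Differentiable ℝ wq := hwq.differentiable (by norm_num)
  have hdp : Differentiable ℝ wp := hwp.differentiable (by norm_num)
  have hloc : IsLocalMax v y0 := Filter.Eventually.of_forall hy0
  have h0 : fderiv ℝ v y0 = 0 := hloc.fderiv_eq_zero
  have hsub : fderiv ℝ v y0 = fderiv ℝ wq y0 - fderiv ℝ wp y0 := fderiv_sub (hdq y0) (hdp y0)
  have hfeq : fderiv ℝ wq y0 = fderiv ℝ wp y0 := by
    have := hsub.symm.trans h0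
    exact sub_eq_zero.mp this
  have hgeq : gradient wq y0 = gradient wp y0 := by
    rw [aux_gradient_def, aux_gradient_def, hfeq]
  set g : EuclideanSpace ℝ (Fin n) := gradient wp y0 with hg_def
  -- trace estimate
  have htr : ((A y0) * (hessM wq y0 - hessM wp y0)).trace ≤ 0 := by
    rw [← aux_hessM_sub hwp hwq y0]
    exact aux_trace_nonpos (hApsd y0) (aux_hess_qf_nonpos hv hy0)
  -- Hamiltonian estimate
  set R : ℝ := G + ‖p‖ + ‖q‖ with hR
  have hgle : ‖g‖ ≤ G := hwpgrad y0
  have hmem1 : g + p ∈ Metric.closedBall (0 : EuclideanSpace ℝ (Fin n)) R := by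
    rw [Metric.mem_closedBall, dist_zero_right]
    calc ‖g + p‖ ≤ ‖g‖ + ‖p‖ := norm_add_le _ _
      _ ≤ R := by rw [hR]; have := norm_nonneg q; linarith
  have hmem2 : g + q ∈ Metric.closedBall (0 : EuclideanSpace ℝ (Fin n)) R := by
    rw [Metric.mem_closedBall, dist_zero_right]
    calc ‖g + q‖ ≤ ‖g‖ + ‖q‖ := norm_add_le _ _
      _ ≤ R := by rw [hR]; have := norm_nonneg p; linarith
  have hbound : ∀ x ∈ Metric.closedBall (0 : EuclideanSpace ℝ (Fin n)) R,
      ‖fderiv ℝ (fun q' => H q' y0) x‖ ≤ K * (1 + R) := by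
    intro x hx
    rw [Metric.mem_closedBall, dist_zero_right] at hx
    rw [← aux_norm_gradient]
    calc ‖gradient (fun q' => H q' y0) x‖ ≤ K * (1 + ‖x‖) := hHgrad x y0
      _ ≤ K * (1 + R) := by nlinarith
  have hHlip : ‖H (g + p) y0 - H (g + q) y0‖ ≤ K * (1 + R) * ‖(g + p) - (g + q)‖ :=
    (convex_closedBall _ _).norm_image_sub_le_of_norm_fderiv_le
      (fun x _ => (hHdiff y0) x) hbound hmem2 hmem1
  have hdiff : (g + p) - (g + q) = p - q := by abel
  rw [hdiff] at hHlip
  have hHle : H (g + p) y0 - H (g + q) y0 ≤ K * (1 + R) * ‖p - q‖ :=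
    (le_abs_self _).trans (by rwa [Real.norm_eq_abs] at hHlip)
  -- combine
  have e1 := heqp y0
  have e2 := heqq y0
  rw [hgeq] at e2
  rw [← hg_def] at e1
  have htr' : ((A y0) * hessM wq y0).trace - ((A y0) * hessM wp y0).trace ≤ 0 := by
    rwa [Matrix.mul_sub, Matrix.trace_sub] at htr
  have : γp - γq = (((A y0) * hessM wq y0).trace - ((A y0) * hessM wp y0).trace)
      + (H (g + p) y0 - H (g + q) y0) := by
    rw [← e1, ← e2]; ring
  rw [hR] at hHle
  linarith

/-- Local Lipschitz continuity of the effective Hamiltonian. -/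
theorem effective_hamiltonian_lipschitz
    (n : ℕ) (hn : 1 ≤ n)
    (A : EuclideanSpace ℝ (Fin n) → Matrix (Fin n) (Fin n) ℝ)
    (hAsymm : ∀ y, (A y).IsSymm) (hApsd : ∀ y, (A y).PosSemidef)
    (H : EuclideanSpace ℝ (Fin n) → EuclideanSpace ℝ (Fin n) → ℝ)
    (K : ℝ) (hK : 0 < K)
    (hHdiff : ∀ y, Differentiable ℝ (fun q => H q y))
    (hHgrad : ∀ q y, ‖gradient (fun q' => H q' y) q‖ ≤ K * (1 + ‖q‖))
    (p q : EuclideanSpace ℝ (Fin n)) (γp γq : ℝ) (G : ℝ) (hG : 0 ≤ G)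
    (wp wq : EuclideanSpace ℝ (Fin n) → ℝ)
    (hwp : ContDiff ℝ 2 wp) (hwq : ContDiff ℝ 2 wq)
    (hwpper : ZPeriodic wp) (hwqper : ZPeriodic wq)
    (hwpgrad : ∀ y, ‖gradient wp y‖ ≤ G) (hwqgrad : ∀ y, ‖gradient wq y‖ ≤ G)
    (heqp : ∀ y, -((A y) * hessM wp y).trace + H (gradient wp y + p) y = γp)
    (heqq : ∀ y, -((A y) * hessM wq y).trace + H (gradient wq y + q) y = γq) :
    |γp - γq| ≤ K * (1 + G + ‖p‖ + ‖q‖) * ‖p - q‖ := by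
  have h1 := aux_one_sided n A hApsd H K hK hHdiff hHgrad p q γp γq G hG wp wq
    hwp hwq hwpper hwqper hwpgrad heqp heqq
  have h2 := aux_one_sided n A hApsd H K hK hHdiff hHgrad q p γq γp G hG wq wp
    hwq hwp hwqper hwpper hwqgrad heqq heqp
  rw [norm_sub_rev q p] at h2
  rw [abs_sub_le_iff]
  constructor
  · exact h1
  · calc γq - γp ≤ K * (1 + G + ‖q‖ + ‖p‖) * ‖p - q‖ := h2
      _ = K * (1 + G + ‖p‖ + ‖q‖) * ‖p - q‖ := by ring
end

section
/- Let n ≥ 1, T > 0, let H̄ : ℝ^n → ℝ be C², let g : ℝ^n → ℝ be C¹, and let u : ℝ^n × [0, T] → ℝ be C² satisfying ∂_t u(x, t) + H̄(∇_x u(x, t)) = 0 on ℝ^n × [0, T] and u(x, 0) = g(x) for all x. Assume: (i) ∇H̄(∇g(x₀)) ≠ 0 for every x₀ ∈ ℝ^n; and (ii) for every (x, t) ∈ ℝ^n × (0, T] there exists x₀ ∈ ℝ^n with x = x₀ + t ∇H̄(∇g(x₀)) (surjectivity of the characteristics). Then the effective drift B̄(x, t) = ∇H̄(∇_x u(x,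 t)) satisfies B̄(x, t) ≠ 0 for every (x, t) ∈ ℝ^n × [0, T]. -/
set_option maxHeartbeats 1000000
set_option maxSynthPendingDepth 3

open scoped InnerProductSpace

noncomputable def dualIsoR (E : Type*) [NormedAddCommGroup E] [InnerProductSpace ℝ E]
    [CompleteSpace E] : (E →L[ℝ] ℝ) ≃ₗᵢ[ℝ] E where
  toFun := fun m => (InnerProductSpace.toDual ℝ E).symm m
  invFun := fun x => InnerProductSpace.toDual ℝ E x
  map_add' := fun m₁ m₂ => by simp
  map_smul' := fun c m => by simp
  left_inv := fun m => by simp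
  right_inv := fun x => by simp
  norm_map' := fun m => by simp

lemma char_gradient_eq
    {E : Type*} [NormedAddCommGroup E] [InnerProductSpace ℝ E] [CompleteSpace E]
    [ProperSpace E]
    (T : ℝ) (Hbar : E → ℝ) (hHbar : ContDiff ℝ 2 Hbar)
    (g : E → ℝ)
    (u : E → ℝ → ℝ) (hu : ContDiff ℝ 2 (fun q : E × ℝ => u q.1 q.2))
    (hpde : ∀ x, ∀ t ∈ Set.Icc (0:ℝ) T,
      deriv (u x) t + Hbar (gradient (fun x' => u x' t) x) = 0)
    (hinit : ∀ x, u x 0 = g x)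
    (x₀ : E) (t : ℝ) (ht : t ∈ Set.Icc (0:ℝ) T) :
    gradient (fun x' => u x' t) (x₀ + t • gradient Hbar (gradient g x₀))
      = gradient g x₀ := by
  obtain ⟨ht0, htT⟩ := ht
  set τ : (E →L[ℝ] ℝ) →L[ℝ] E :=
    (dualIsoR E).toContinuousLinearEquiv.toContinuousLinearMap with hτdef
  set U : E × ℝ → ℝ := fun q => u q.1 q.2 with hUdef
  have hUd : Differentiable ℝ U := hu.differentiable two_ne_zero
  set f' : E × ℝ → (E × ℝ) →L[ℝ] ℝ := fderiv ℝ U with hf'def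
  have hf'c : ContDiff ℝ 1 f' := hu.fderiv_right (by norm_num)
  have hf'd : Differentiable ℝ f' := hf'c.differentiable one_ne_zero
  set f'' : E × ℝ → (E × ℝ) →L[ℝ] (E × ℝ) →L[ℝ] ℝ := fderiv ℝ f' with hf''def
  have hf''c : Continuous f'' := hf'c.continuous_fderiv one_ne_zero
  have hsymm : ∀ q w₁ w₂, f'' q w₁ w₂ = f'' q w₂ w₁ :=
    fun q => second_derivative_symmetric (fun y => (hUd y).hasFDerivAt) (hf'd q).hasFDerivAt
  set inlE : E →L[ℝ] E × ℝ := ContinuousLinearMap.inl ℝ E ℝ with hinlE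
  set Φ : ((E × ℝ) →L[ℝ] ℝ) →L[ℝ] (E →L[ℝ] ℝ) :=
    (ContinuousLinearMap.compL ℝ E (E × ℝ) ℝ).flip inlE with hΦdef
  have hΦapp : ∀ (M : (E × ℝ) →L[ℝ] ℝ) (e : E), Φ M e = M (e, 0) := fun M e => rfl
  have hι : ∀ (x : E) (s : ℝ), HasFDerivAt (fun x' : E => (x', s)) inlE x := fun x s =>
    (hasFDerivAt_id x).prodMk (hasFDerivAt_const s x)
  have hpx : ∀ (x : E) (s : ℝ), HasFDerivAt (fun x' => u x' s) (Φ (f' (x, s))) x := by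
    intro x s
    exact ((hUd (x, s)).hasFDerivAt.comp x (hι x s))
  have hgradx : ∀ (x : E) (s : ℝ), gradient (fun x' => u x' s) x = τ (Φ (f' (x, s))) := by
    intro x s
    have h : fderiv ℝ (fun x' => u x' s) x = Φ (f' (x, s)) := (hpx x s).fderiv
    rw [gradient, h]; rfl
  have hpt : ∀ (x : E) (s : ℝ), deriv (u x) s = f' (x, s) (0, 1) := by
    intro x s
    have h : HasDerivAt (fun s' => U (x, s')) (f' (x, s) ((0:E), (1:ℝ))) s :=
      (hUd (x, s)).hasFDerivAt.comp_hasDerivAt s ((hasDerivAt_const s x).prodMk (hasDerivAt_id s))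
    exact h.deriv
  have hHd : Differentiable ℝ Hbar := hHbar.differentiable two_ne_zero
  have hgradH : ∀ p, gradient Hbar p = τ (fderiv ℝ Hbar p) := fun p => rfl
  have hpair : ∀ (p : E) (m : E →L[ℝ] ℝ), fderiv ℝ Hbar p (τ m) = m (gradient Hbar p) := by
    intro p m
    have h1 : ⟪τ (fderiv ℝ Hbar p), τ m⟫_ℝ = fderiv ℝ Hbar p (τ m) :=
      InnerProductSpace.toDual_symm_apply
    have h2 : ⟪τ m, gradient Hbar p⟫_ℝ = m (gradient Hbar p) :=
      InnerProductSpace.toDual_symm_apply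
    rw [← h1, hgradH, real_inner_comm]
    exact InnerProductSpace.toDual_symm_apply
  -- Key identity obtained by differentiating the PDE in x
  have key : ∀ s ∈ Set.Icc (0:ℝ) T, ∀ x : E,
      Φ (f'' (x, s) (gradient Hbar (τ (Φ (f' (x, s)))), 1)) = 0 := by
    intro s hs x
    have hF0 : (fun x' : E => f' (x', s) (0, 1) + Hbar (τ (Φ (f' (x', s)))))
        = fun _ : E => (0:ℝ) := by
      funext x'
      have h := hpde x' s hs
      rwa [hpt x' s, hgradx x' s] at h
    have hG : HasFDerivAt (fun x' : E => τ (Φ (f' (x', s))))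
        ((τ.comp (Φ.comp (f'' (x, s)))).comp inlE) x := by
      have hA0 : HasFDerivAt (⇑Φ ∘ f') (Φ.comp (f'' (x, s))) (x, s) :=
        Φ.hasFDerivAt.comp (x, s) (hf'd (x, s)).hasFDerivAt
      have hA : HasFDerivAt (⇑τ ∘ (⇑Φ ∘ f'))
          (τ.comp (Φ.comp (f'' (x, s)))) (x, s) := τ.hasFDerivAt.comp (x, s) hA0
      exact hA.comp x (hι x s)
    have hB : HasFDerivAt (fun x' : E => Hbar (τ (Φ (f' (x', s)))))
        ((fderiv ℝ Hbar (τ (Φ (f' (x, s))))).comp ((τ.comp (Φ.comp (f'' (x, s)))).comp inlE))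
        x := (hHd _).hasFDerivAt.comp x hG
    have hA1 : HasFDerivAt (fun x' : E => f' (x', s) (0, 1))
        (((ContinuousLinearMap.apply ℝ ℝ ((0:E), (1:ℝ))).comp (f'' (x, s))).comp inlE) x := by
      have h1 : HasFDerivAt (fun q : E × ℝ => f' q ((0:E), (1:ℝ)))
          ((ContinuousLinearMap.apply ℝ ℝ ((0:E), (1:ℝ))).comp (f'' (x, s))) (x, s) :=
        (ContinuousLinearMap.apply ℝ ℝ ((0:E), (1:ℝ))).hasFDerivAt.comp _
          (hf'd (x, s)).hasFDerivAt
      exact h1.comp x (hι x s)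
    have hsum : HasFDerivAt (fun x' : E => f' (x', s) (0, 1) + Hbar (τ (Φ (f' (x', s))))) _ x :=
      hA1.add hB
    rw [hF0] at hsum
    have hDeq := hsum.unique (hasFDerivAt_const (0:ℝ) x)
    ext e
    have he : ((((ContinuousLinearMap.apply ℝ ℝ ((0:E), (1:ℝ))).comp (f'' (x, s))).comp inlE)
        + (fderiv ℝ Hbar (τ (Φ (f' (x, s))))).comp
            ((τ.comp (Φ.comp (f'' (x, s)))).comp inlE)) e = 0 := by rw [hDeq]; rfl
    have hinlapp : ∀ e : E, inlE e = ((e, 0) : E × ℝ) := fun _ => rfl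
    simp only [ContinuousLinearMap.add_apply, ContinuousLinearMap.comp_apply,
      ContinuousLinearMap.apply_apply, hinlapp] at he
    rw [hpair] at he
    -- he : f'' (x,s) (e,0) (0,1) + Φ (f'' (x,s) (e,0)) (gradient Hbar (τ (Φ (f' (x,s))))) = 0
    rw [hΦapp] at he
    set p : E := gradient Hbar (τ (Φ (f' (x, s)))) with hpdef
    have hcomb : f'' (x, s) (e, 0) (p, 1) = 0 := by
      have hsplit : ((p, (1:ℝ)) : E × ℝ) = ((p, 0) : E × ℝ) + ((0, 1) : E × ℝ) := by
        simp [Prod.ext_iff]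
      rw [hsplit, map_add]
      linarith [he]
    rw [hΦapp, hsymm (x, s) (p, 1) (e, 0)]
    simpa using hcomb
  -- characteristic curve
  set v : E := gradient Hbar (gradient g x₀) with hvdef
  set ξ : ℝ → E × ℝ := fun s => (x₀ + s • v, s) with hξdef
  have hξcont : Continuous ξ :=
    (continuous_const.add (continuous_id.smul continuous_const)).prodMk continuous_id
  set η : ℝ → E →L[ℝ] ℝ := fun s => Φ (f' (ξ s)) with hηdef
  have hηcont : Continuous η := Φ.continuous.comp ((hf'c.continuous).comp hξcont)
  have hηderiv : ∀ s : ℝ, HasDerivAt η (Φ (f'' (ξ s) (v, 1))) s := by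
    intro s
    have h1 : HasDerivAt (fun s' : ℝ => x₀ + s' • v) v s := by
      simpa using ((hasDerivAt_id s).smul_const v).const_add x₀
    have hξ' : HasDerivAt ξ (v, (1:ℝ)) s := h1.prodMk (hasDerivAt_id s)
    have h2 : HasDerivAt (fun s' => f' (ξ s')) (f'' (ξ s) (v, 1)) s :=
      (hf'd (ξ s)).hasFDerivAt.comp_hasDerivAt s hξ'
    exact Φ.hasFDerivAt.comp_hasDerivAt s h2
  have hτη0 : τ (η 0) = gradient g x₀ := by
    have hg0 : (fun x' => u x' 0) = g := funext hinit
    have h0 := hgradx x₀ 0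
    rw [hg0] at h0
    have hξ0 : ξ 0 = (x₀, 0) := by rw [hξdef]; simp
    show τ (Φ (f' (ξ 0))) = gradient g x₀
    rw [hξ0]
    exact h0.symm
  -- clamped time
  set π : ℝ → ℝ := fun s => max 0 (min s t) with hπdef
  have hπmem : ∀ s, π s ∈ Set.Icc (0:ℝ) t := fun s =>
    ⟨le_max_left _ _, max_le ht0 (min_le_right s t)⟩
  have hπid : ∀ s ∈ Set.Icc (0:ℝ) t, π s = s := by
    intro s hs
    show max 0 (min s t) = s
    rw [min_eq_left hs.2, max_eq_right hs.1]
  -- bounds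
  have hcont1 : ContinuousOn (fun s : ℝ => f'' (ξ s)) (Set.Icc (0:ℝ) t) :=
    (hf''c.comp hξcont).continuousOn
  have hBC : ∃ C, ∀ s' ∈ Set.Icc (0:ℝ) t, ‖f'' (ξ s')‖ ≤ C :=
    IsCompact.exists_bound_of_continuousOn isCompact_Icc hcont1
  obtain ⟨C, hC⟩ := hBC
  have hC0 : 0 ≤ C := le_trans (norm_nonneg _) (hC 0 ⟨le_rfl, ht0⟩)
  have hcont2 : ContinuousOn η (Set.Icc (0:ℝ) t) := hηcont.continuousOn
  have hBR : ∃ R, ∀ s' ∈ Set.Icc (0:ℝ) t, ‖η s'‖ ≤ R :=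
    IsCompact.exists_bound_of_continuousOn isCompact_Icc hcont2
  obtain ⟨R, hR⟩ := hBR
  have hR0 : 0 ≤ R := le_trans (norm_nonneg _) (hR 0 ⟨le_rfl, ht0⟩)
  set B : Set (E →L[ℝ] ℝ) := Metric.closedBall 0 R with hBdef
  have hgradC1 : ContDiff ℝ 1 (gradient Hbar) := by
    have hrw : gradient Hbar = fun p => τ (fderiv ℝ Hbar p) := funext hgradH
    rw [hrw]
    exact τ.contDiff.comp (hHbar.fderiv_right (by norm_num))
  have hcont3 : ContinuousOn (fderiv ℝ (gradient Hbar)) (Metric.closedBall (0:E) R) :=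
    (hgradC1.continuous_fderiv one_ne_zero).continuousOn
  have hBL : ∃ L, ∀ p ∈ Metric.closedBall (0:E) R, ‖fderiv ℝ (gradient Hbar) p‖ ≤ L :=
    IsCompact.exists_bound_of_continuousOn (isCompact_closedBall (0:E) R) hcont3
  obtain ⟨L, hL⟩ := hBL
  have hL0 : 0 ≤ L := le_trans (norm_nonneg _) (hL 0 (Metric.mem_closedBall_self hR0))
  have hgradLip : LipschitzOnWith ⟨L, hL0⟩ (gradient Hbar) (Metric.closedBall (0:E) R) := by
    apply (convex_closedBall (0:E) R).lipschitzOnWith_of_nnnorm_fderiv_le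
      (fun p _ => (hgradC1.differentiable one_ne_zero) p)
    intro p hp
    exact NNReal.coe_le_coe.1 (hL p hp)
  set vf : ℝ → (E →L[ℝ] ℝ) → (E →L[ℝ] ℝ) :=
    fun s m => Φ (f'' (ξ (π s)) (v - gradient Hbar (τ m), 0)) with hvfdef
  have hΦnorm : ∀ M : (E × ℝ) →L[ℝ] ℝ, ‖Φ M‖ ≤ ‖M‖ := by
    intro M
    refine ContinuousLinearMap.opNorm_le_bound _ (norm_nonneg M) fun e => ?_
    rw [hΦapp]
    calc ‖M (e, 0)‖ ≤ ‖M‖ * ‖((e, 0) : E × ℝ)‖ := M.le_opNorm _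
      _ = ‖M‖ * ‖e‖ := by
          rw [Prod.norm_def]
          simp [max_eq_left (norm_nonneg e)]
  have hprodnorm : ∀ w : E, ‖((w, 0) : E × ℝ)‖ = ‖w‖ := by
    intro w
    rw [Prod.norm_def]
    simp [max_eq_left (norm_nonneg w)]
  have hτnorm : ∀ m : E →L[ℝ] ℝ, ‖τ m‖ = ‖m‖ := fun m => (dualIsoR E).norm_map m
  set K : NNReal := ⟨C, hC0⟩ * ⟨L, hL0⟩ with hKdef
  have hvfLip : ∀ s, LipschitzOnWith K (vf s) B := by
    intro s
    apply LipschitzOnWith.of_dist_le_mul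
    intro m₁ h₁ m₂ h₂
    have hτmem : ∀ m ∈ B, τ m ∈ Metric.closedBall (0:E) R := by
      intro m hm
      rw [hBdef, Metric.mem_closedBall, dist_zero_right] at hm
      rw [Metric.mem_closedBall, dist_zero_right, hτnorm]
      exact hm
    have hgd : ‖gradient Hbar (τ m₁) - gradient Hbar (τ m₂)‖ ≤ L * ‖m₁ - m₂‖ := by
      have h := hgradLip.dist_le_mul _ (hτmem m₁ h₁) _ (hτmem m₂ h₂)
      rw [dist_eq_norm, dist_eq_norm, ← map_sub, hτnorm] at h
      exact h
    have heq : vf s m₁ - vf s m₂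
        = Φ (f'' (ξ (π s)) (gradient Hbar (τ m₂) - gradient Hbar (τ m₁), 0)) := by
      show Φ (f'' (ξ (π s)) (v - gradient Hbar (τ m₁), 0))
          - Φ (f'' (ξ (π s)) (v - gradient Hbar (τ m₂), 0)) = _
      rw [← map_sub Φ, ← map_sub (f'' (ξ (π s)))]
      congr 2
      rw [Prod.mk_sub_mk, sub_zero, sub_sub_sub_cancel_left]
    rw [dist_eq_norm, dist_eq_norm, heq]
    calc ‖Φ (f'' (ξ (π s)) (gradient Hbar (τ m₂) - gradient Hbar (τ m₁), 0))‖
        ≤ ‖f'' (ξ (π s)) (gradient Hbar (τ m₂) - gradient Hbar (τ m₁), 0)‖ := hΦnorm _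
      _ ≤ ‖f'' (ξ (π s))‖ * ‖((gradient Hbar (τ m₂) - gradient Hbar (τ m₁), 0) : E × ℝ)‖ :=
          (f'' (ξ (π s))).le_opNorm _
      _ = ‖f'' (ξ (π s))‖ * ‖gradient Hbar (τ m₂) - gradient Hbar (τ m₁)‖ := by
          rw [hprodnorm]
      _ ≤ C * (L * ‖m₁ - m₂‖) := by
          apply mul_le_mul (hC _ (hπmem s)) ?_ (norm_nonneg _) hC0
          rw [norm_sub_rev]
          exact hgd
      _ = ↑K * ‖m₁ - m₂‖ := by
          show C * (L * ‖m₁ - m₂‖) = (C * L) * ‖m₁ - m₂‖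
          ring
  have hfsol : ∀ s ∈ Set.Ico (0:ℝ) t, HasDerivWithinAt η (vf s (η s)) (Set.Ici s) s := by
    intro s hs
    have hsIcc : s ∈ Set.Icc (0:ℝ) T := ⟨hs.1, le_trans hs.2.le htT⟩
    have hval : vf s (η s) = Φ (f'' (ξ s) (v, 1)) := by
      have hπs : π s = s := hπid s ⟨hs.1, hs.2.le⟩
      have hkey' : Φ (f'' (ξ s) (gradient Hbar (τ (η s)), 1)) = 0 := key s hsIcc (x₀ + s • v)
      have hsplit : ((v, (1:ℝ)) : E × ℝ)
          = ((v - gradient Hbar (τ (η s)), 0) : E × ℝ) + (gradient Hbar (τ (η s)), 1) := by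
        simp [Prod.ext_iff]
      show Φ (f'' (ξ (π s)) (v - gradient Hbar (τ (η s)), 0)) = Φ (f'' (ξ s) (v, 1))
      rw [hπs, hsplit, map_add, map_add, hkey', add_zero]
    rw [hval]
    exact (hηderiv s).hasDerivWithinAt
  have hgsol : ∀ s ∈ Set.Ico (0:ℝ) t,
      HasDerivWithinAt (fun _ : ℝ => η 0) (vf s ((fun _ : ℝ => η 0) s)) (Set.Ici s) s := by
    intro s hs
    have hval : vf s (η 0) = 0 := by
      show Φ (f'' (ξ (π s)) (v - gradient Hbar (τ (η 0)), 0)) = 0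
      rw [hτη0, ← hvdef, sub_self]
      rw [show ((0, 0) : E × ℝ) = 0 from rfl, map_zero, map_zero]
    show HasDerivWithinAt (fun _ : ℝ => η 0) (vf s (η 0)) (Set.Ici s) s
    rw [hval]
    exact (hasDerivAt_const s _).hasDerivWithinAt
  have hfmem : ∀ s ∈ Set.Ico (0:ℝ) t, η s ∈ B := by
    intro s hs
    rw [hBdef, Metric.mem_closedBall, dist_zero_right]
    exact hR s ⟨hs.1, hs.2.le⟩
  have hgmem : ∀ s ∈ Set.Ico (0:ℝ) t, (fun _ : ℝ => η 0) s ∈ B := by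
    intro s hs
    rw [hBdef, Metric.mem_closedBall, dist_zero_right]
    exact hR 0 ⟨le_rfl, ht0⟩
  have huniq := ODE_solution_unique_of_mem_Icc_right (s := fun _ => B) (fun s _ => hvfLip s)
    hηcont.continuousOn hfsol hfmem continuousOn_const hgsol hgmem rfl
  have hηt : η t = η 0 := huniq ⟨ht0, le_rfl⟩
  have hfin := hgradx (x₀ + t • v) t
  rw [hfin]
  show τ (Φ (f' (ξ t))) = gradient g x₀
  rw [show Φ (f' (ξ t)) = η t from rfl, hηt, hτη0]


/-- If the characteristic directions never vanish and the characteristics sweep out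
all of space, then the effective drift `B̄(x,t) = ∇H̄(∇ₓu(x,t))` never vanishes. -/
theorem effective_drift_nonvanishing
    (n : ℕ) (hn : 1 ≤ n) (T : ℝ) (hT : 0 < T)
    (Hbar : EuclideanSpace ℝ (Fin n) → ℝ) (hHbar : ContDiff ℝ 2 Hbar)
    (g : EuclideanSpace ℝ (Fin n) → ℝ) (hg : ContDiff ℝ 1 g)
    (u : EuclideanSpace ℝ (Fin n) → ℝ → ℝ)
    (hu : ContDiff ℝ 2 (fun q : EuclideanSpace ℝ (Fin n) × ℝ => u q.1 q.2))
    (hpde : ∀ x, ∀ t ∈ Set.Icc (0:ℝ) T,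
      deriv (u x) t + Hbar (gradient (fun x' => u x' t) x) = 0)
    (hinit : ∀ x, u x 0 = g x)
    (hnonvanish : ∀ x₀, gradient Hbar (gradient g x₀) ≠ 0)
    (hsurj : ∀ x : EuclideanSpace ℝ (Fin n), ∀ t ∈ Set.Ioc (0:ℝ) T,
      ∃ x₀, x = x₀ + t • gradient Hbar (gradient g x₀)) :
    ∀ x, ∀ t ∈ Set.Icc (0:ℝ) T,
      gradient Hbar (gradient (fun x' => u x' t) x) ≠ 0 := by
  intro x t ht
  rcases eq_or_lt_of_le ht.1 with h0 | h0
  · have hg0 : (fun x' => u x' 0) = g := funext hinit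
    rw [← h0, hg0]
    exact hnonvanish x
  · obtain ⟨x₀, hx₀⟩ := hsurj x t ⟨h0, ht.2⟩
    have h := char_gradient_eq T Hbar hHbar g u hu hpde hinit x₀ t ht
    rw [hx₀, h]
    exact hnonvanish x₀
end
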